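/- Fix n ≥ 2, σ > 0, and let Y = μ + ε where μ ∈ ℝⁿ and ε₁,…,ε_n are independent centered Gaussian variables of variance σ². For λ ≥ 0 let β̂^F(y, λ) be the unique minimizer of (1/2)Σ_{i=1}^n (y_i − β_i)² + λ Σ_{i=1}^{n−1}|β_i − β_{i+1}|, and let K^F(y, λ) = 1 + #{i ∈ {1,…,n−1} : β̂^F(y, λ)_i ≠ β̂^F(y, λ)_{i+1}} be the number of fused groups; define β̂^{FNI}(y, λ_F, λ_NI) and K^{FNI}(y, λ_F, λ_NI) analogously with objective (1/2)Σ(y_i − β_i)² + λ_F Σ|β_i − β_{i+1}| + λ_NI Σ max(β_i − β_{i+1}, 0). Assume (the known degrees-of-freedom result for the fusion estimator) that for every μ' ∈ ℝⁿ and every λ ≥ 0, with Y' = μ' + ε, all relevant random variables are square-integrable, K^F(Y', λ) is integrable, and E[K^F(Y', λ)] = (1/σ²) Σ_{i=1}^n Cov[β̂^F_i(Y', λ), Y'_i]. Then for all λ_F ≥ 0, λ_NI ≥ 0, E[K^{FNI}(Y, λ_F, λ_NI)] = (1/σ²) Σ_{i=1}^n Cov[β̂^{FNI}_i(Y, λ_F,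 λ_NI), Y_i]; i.e. the number of fused groups is an unbiased estimator of the degrees of freedom of the fused nearly-isotonic estimator. -/

import Mathlib

open Finset MeasureTheory ProbabilityTheory

/-- The one-dimensional fused lasso nearly-isotonic objective
`F(β) = (1/2)Σᵢ(yᵢ−βᵢ)² + λ_F Σᵢ|βᵢ−βᵢ₊₁| + λ_L Σᵢ|βᵢ| + λ_NI Σᵢ max(βᵢ−βᵢ₊₁,0)`. -/
noncomputable def flni1 {n : ℕ} (y : Fin (n + 1) → ℝ) (lF lL lNI : ℝ)
    (β : Fin (n + 1) → ℝ) : ℝ :=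
  (1 / 2) * ∑ i, (y i - β i) ^ 2
    + lF * ∑ i : Fin n, |β i.castSucc - β i.succ|
    + lL * ∑ i, |β i|
    + lNI * ∑ i : Fin n, max (β i.castSucc - β i.succ) 0

/-- `Cov[U, V] = E[UV] − E[U]E[V]`. -/
noncomputable def cov {Ω : Type*} [MeasureSpace Ω] (U V : Ω → ℝ) : ℝ :=
  (∫ ω, U ω * V ω) - (∫ ω, U ω) * (∫ ω, V ω)

/-- midpoint strict convexity estimate -/
lemma flni1_midpoint {n : ℕ} (y : Fin (n + 1) → ℝ) (lF lL lNI : ℝ)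
    (hlF : 0 ≤ lF) (hlL : 0 ≤ lL) (hlNI : 0 ≤ lNI) (a b : Fin (n + 1) → ℝ) :
    flni1 y lF lL lNI (fun i => (a i + b i) / 2) + (1 / 8) * ∑ i, (a i - b i) ^ 2
      ≤ (flni1 y lF lL lNI a + flni1 y lF lL lNI b) / 2 := by
  unfold flni1
  have hq : ∑ i, (y i - (a i + b i) / 2) ^ 2 + (1/4) * ∑ i, (a i - b i) ^ 2
      = (∑ i, (y i - a i) ^ 2 + ∑ i, (y i - b i) ^ 2) / 2 := by
    rw [Finset.mul_sum, ← Finset.sum_add_distrib, ← Finset.sum_add_distrib,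
      Finset.sum_div]
    exact Finset.sum_congr rfl fun i _ => by ring
  have hA : ∑ i : Fin n, |(fun i => (a i + b i)/2) i.castSucc - (fun i => (a i + b i)/2) i.succ|
      ≤ (∑ i : Fin n, |a i.castSucc - a i.succ| + ∑ i : Fin n, |b i.castSucc - b i.succ|) / 2 := by
    rw [← Finset.sum_add_distrib, Finset.sum_div]
    refine Finset.sum_le_sum fun i _ => ?_
    have : (fun i => (a i + b i)/2) i.castSucc - (fun i => (a i + b i)/2) i.succ
        = ((a i.castSucc - a i.succ) + (b i.castSucc - b i.succ)) / 2 := by ring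
    rw [this, abs_div, abs_two]
    have := abs_add_le (a i.castSucc - a i.succ) (b i.castSucc - b i.succ)
    linarith
  have hL : ∑ i, |(a i + b i)/2| ≤ (∑ i, |a i| + ∑ i, |b i|) / 2 := by
    rw [← Finset.sum_add_distrib, Finset.sum_div]
    refine Finset.sum_le_sum fun i _ => ?_
    rw [abs_div, abs_two]
    have := abs_add_le (a i) (b i)
    linarith
  have hM : ∑ i : Fin n, max ((fun i => (a i + b i)/2) i.castSucc - (fun i => (a i + b i)/2) i.succ) 0
      ≤ (∑ i : Fin n, max (a i.castSucc - a i.succ) 0 + ∑ i : Fin n, max (b i.castSucc - b i.succ) 0) / 2 := by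
    rw [← Finset.sum_add_distrib, Finset.sum_div]
    refine Finset.sum_le_sum fun i _ => ?_
    have h1 : (fun i => (a i + b i)/2) i.castSucc - (fun i => (a i + b i)/2) i.succ
        = ((a i.castSucc - a i.succ) + (b i.castSucc - b i.succ)) / 2 := by ring
    rw [h1]
    have ha := le_max_left (a i.castSucc - a i.succ) 0
    have hb := le_max_left (b i.castSucc - b i.succ) 0
    have ha0 := le_max_right (a i.castSucc - a i.succ) 0
    have hb0 := le_max_right (b i.castSucc - b i.succ) 0
    rcases le_total (((a i.castSucc - a i.succ) + (b i.castSucc - b i.succ)) / 2) 0 with h|h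
    · rw [max_eq_right h]; linarith
    · rw [max_eq_left h]; linarith
  have hA' := mul_le_mul_of_nonneg_left hA hlF
  have hL' := mul_le_mul_of_nonneg_left hL hlL
  have hM' := mul_le_mul_of_nonneg_left hM hlNI
  simp only at hq hA' hL' hM' ⊢
  linarith

lemma flni1_min_unique {n : ℕ} (y : Fin (n + 1) → ℝ) (lF lL lNI : ℝ)
    (hlF : 0 ≤ lF) (hlL : 0 ≤ lL) (hlNI : 0 ≤ lNI) (a b : Fin (n + 1) → ℝ)
    (ha : ∀ β, flni1 y lF lL lNI a ≤ flni1 y lF lL lNI β)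
    (hb : ∀ β, flni1 y lF lL lNI b ≤ flni1 y lF lL lNI β) : a = b := by
  have hm := flni1_midpoint y lF lL lNI hlF hlL hlNI a b
  have h1 := ha (fun i => (a i + b i) / 2)
  have h2 := ha b
  have h3 := hb a
  have hsum : ∑ i, (a i - b i) ^ 2 ≤ 0 := by linarith
  have hnn : (0:ℝ) ≤ ∑ i, (a i - b i) ^ 2 :=
    Finset.sum_nonneg fun i _ => sq_nonneg _
  have hz : ∑ i, (a i - b i) ^ 2 = 0 := le_antisymm hsum hnn
  funext i
  have := (Finset.sum_eq_zero_iff_of_nonneg (fun i _ => sq_nonneg (a i - b i))).mp hz i (Finset.mem_univ i)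
  have := pow_eq_zero_iff (n := 2) (by norm_num) |>.mp this
  linarith [this]

/-- the vector `Dᵀ1` -/
noncomputable def dvec (n : ℕ) : Fin (n + 2) → ℝ :=
  fun i => if i = 0 then 1 else if i = Fin.last (n + 1) then -1 else 0

lemma sum_dvec_mul {n : ℕ} (x : Fin (n + 2) → ℝ) :
    ∑ i, dvec n i * x i = x 0 - x (Fin.last (n + 1)) := by
  have h0 : (0 : Fin (n + 2)) ≠ Fin.last (n + 1) := by
    intro h
    have := congrArg Fin.val h
    simp [Fin.last] at this
  have key : ∀ i : Fin (n + 2), dvec n i * x i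
      = (if i = 0 then x 0 else 0) + (if i = Fin.last (n + 1) then -(x (Fin.last (n + 1))) else 0) := by
    intro i
    by_cases hi0 : i = 0
    · subst hi0; simp [dvec, h0, if_neg (Ne.symm h0)]
    · by_cases hil : i = Fin.last (n + 1)
      · subst hil; simp [dvec, hi0]
      · simp [dvec, hi0, hil]
  rw [Finset.sum_congr rfl fun i _ => key i, Finset.sum_add_distrib,
    Finset.sum_ite_eq' Finset.univ (0 : Fin (n+2)) (fun _ => x 0),
    Finset.sum_ite_eq' Finset.univ (Fin.last (n+1)) (fun _ => -(x (Fin.last (n+1))))]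
  simp
  ring

lemma telescope_fin {n : ℕ} (β : Fin (n + 2) → ℝ) :
    ∑ i : Fin (n + 1), (β i.castSucc - β i.succ) = β 0 - β (Fin.last (n + 1)) := by
  set f : ℕ → ℝ := fun k => β ⟨k % (n + 2), Nat.mod_lt k (Nat.succ_pos _)⟩ with hf
  have key : ∀ i : Fin (n + 1), β i.castSucc - β i.succ = f ↑i - f (↑i + 1) := by
    intro i
    have h1 : β i.castSucc = f ↑i := by
      simp only [hf]
      congr 1
      apply Fin.ext
      simp [Nat.mod_eq_of_lt (by omega : (i : ℕ) < n + 2)]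
    have h2 : β i.succ = f (↑i + 1) := by
      simp only [hf]
      congr 1
      apply Fin.ext
      simp [Nat.mod_eq_of_lt (by omega : (i : ℕ) + 1 < n + 2)]
    rw [h1, h2]
  rw [Finset.sum_congr rfl fun i _ => key i]
  rw [Fin.sum_univ_eq_sum_range (fun k => f k - f (k + 1)) (n + 1),
    Finset.sum_range_sub' f (n + 1)]
  have e0 : f 0 = β 0 := by
    simp only [hf]; congr 1
  have e1 : f (n + 1) = β (Fin.last (n + 1)) := by
    simp only [hf]; congr 1; apply Fin.ext
    simp [Fin.last, Nat.mod_eq_of_lt (by omega : n + 1 < n + 2)]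
  rw [e0, e1]

lemma flni1_shift {n : ℕ} (y : Fin (n + 2) → ℝ) (lF lNI : ℝ) (β : Fin (n + 2) → ℝ) :
    flni1 y lF 0 lNI β
      = flni1 (fun i => y i - lNI / 2 * dvec n i) (lF + lNI / 2) 0 0 β
        + (lNI / 2 * (y 0 - y (Fin.last (n + 1))) - (lNI / 2) ^ 2) := by
  have hmax : ∑ i : Fin (n + 1), max (β i.castSucc - β i.succ) 0
      = ((∑ i : Fin (n + 1), (β i.castSucc - β i.succ))
          + ∑ i : Fin (n + 1), |β i.castSucc - β i.succ|) / 2 := by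
    rw [← Finset.sum_add_distrib, Finset.sum_div]
    refine Finset.sum_congr rfl fun i _ => ?_
    rcases le_total (β i.castSucc - β i.succ) 0 with h|h
    · rw [max_eq_right h, abs_of_nonpos h]; ring
    · rw [max_eq_left h, abs_of_nonneg h]; ring
  have htel := telescope_fin β
  have hq : ∑ i, ((fun i => y i - lNI / 2 * dvec n i) i - β i) ^ 2
      = ∑ i, (y i - β i) ^ 2
        - 2 * (lNI / 2) * ∑ i, dvec n i * (y i - β i)
        + (lNI / 2) ^ 2 * ∑ i, dvec n i * dvec n i := by
    rw [Finset.mul_sum, Finset.mul_sum, ← Finset.sum_sub_distrib, ← Finset.sum_add_distrib]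
    refine Finset.sum_congr rfl fun i _ => ?_
    simp only
    ring
  have hd1 := sum_dvec_mul (n := n) (fun i => y i - β i)
  have hd2 : ∑ i, dvec n i * dvec n i = 2 := by
    rw [sum_dvec_mul (n := n) (dvec n)]
    have h0 : (0 : Fin (n + 2)) ≠ Fin.last (n + 1) := by
      intro h
      have := congrArg Fin.val h
      simp [Fin.last] at this
    simp [dvec, if_neg (Ne.symm h0)]
    norm_num
  unfold flni1
  rw [hmax, htel, hq, hd1, hd2]
  ring

lemma cov_add_const {Ω : Type*} [MeasureSpace Ω] [IsProbabilityMeasure (ℙ : Measure Ω)]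
    (U V : Ω → ℝ) (c : ℝ) (hU : MemLp U 2 ℙ) (hV : MemLp V 2 ℙ) :
    cov U (fun ω => V ω + c) = cov U V := by
  have hUi : Integrable U ℙ := hU.integrable (by norm_num)
  have hVi : Integrable V ℙ := hV.integrable (by norm_num)
  have hUV : Integrable (fun ω => U ω * V ω) ℙ := by
    have : MemLp (U * V) 1 ℙ := hV.smul hU (r := 1) (hpqr := ⟨by simp [ENNReal.inv_two_add_inv_two]⟩)
    exact memLp_one_iff_integrable.mp this
  unfold cov
  have h1 : ∫ ω, U ω * (V ω + c) = (∫ ω, U ω * V ω) + (∫ ω, U ω) * c := by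
    have he : ∀ ω, U ω * (V ω + c) = U ω * V ω + U ω * c := fun ω => by ring
    simp_rw [he]
    rw [integral_add hUV (hUi.mul_const c), integral_mul_const]
  have h2 : ∫ ω, (V ω + c) = (∫ ω, V ω) + c := by
    rw [integral_add hVi (integrable_const c), integral_const]
    simp
  rw [h1, h2]
  ring

/-- Unbiased estimation of the degrees of freedom of the fused nearly-isotonic
estimator: if the number of fused groups `K^F` is an unbiased estimator of the
degrees of freedom of the fusion estimator `β̂^F` for every mean vector and
penalty level, then the number of fused groups `K^{FNI}` is an unbiased
estimator of the degrees of freedom of the fused nearly-isotonic estimator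
`β̂^{FNI}`.  (The sample size is `n + 2 ≥ 2`, the noise is i.i.d. centered
Gaussian with variance `σ²`.) -/
theorem df_fni_unbiased {Ω : Type*} [MeasureSpace Ω]
    [IsProbabilityMeasure (ℙ : Measure Ω)]
    (n : ℕ) (σ : ℝ) (hσ : 0 < σ)
    (μ : Fin (n + 2) → ℝ) (ε : Fin (n + 2) → Ω → ℝ)
    (hmeas : ∀ i, Measurable (ε i))
    (hindep : iIndepFun ε ℙ)
    (hgauss : ∀ i, Measure.map (ε i) ℙ = gaussianReal 0 (Real.toNNReal (σ ^ 2)))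
    (Y : Ω → Fin (n + 2) → ℝ) (hY : ∀ ω i, Y ω i = μ i + ε i ω)
    -- the fusion estimator `β̂^F(y, λ)` and its number of fused groups `K^F(y, λ)`
    (bF : (Fin (n + 2) → ℝ) → ℝ → (Fin (n + 2) → ℝ))
    (hbF : ∀ y l β, flni1 y l 0 0 (bF y l) ≤ flni1 y l 0 0 β)
    (KF : (Fin (n + 2) → ℝ) → ℝ → ℝ)
    (hKF : ∀ y l, KF y l = 1 + (Finset.univ.filter
      (fun i : Fin (n + 1) => bF y l i.castSucc ≠ bF y l i.succ)).card)
    -- the fused nearly-isotonic estimator `β̂^{FNI}(y, λ_F, λ_NI)` and `K^{FNI}`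
    (bFNI : (Fin (n + 2) → ℝ) → ℝ → ℝ → (Fin (n + 2) → ℝ))
    (hbFNI : ∀ y lF lNI β, flni1 y lF 0 lNI (bFNI y lF lNI) ≤ flni1 y lF 0 lNI β)
    (KFNI : (Fin (n + 2) → ℝ) → ℝ → ℝ → ℝ)
    (hKFNI : ∀ y lF lNI, KFNI y lF lNI = 1 + (Finset.univ.filter
      (fun i : Fin (n + 1) => bFNI y lF lNI i.castSucc ≠ bFNI y lF lNI i.succ)).card)
    -- the known degrees-of-freedom result for the fusion estimator
    (hdfF : ∀ (μ' : Fin (n + 2) → ℝ) (l : ℝ), 0 ≤ l →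
      (∀ i, MemLp (fun ω => μ' i + ε i ω) 2 ℙ) ∧
      (∀ i, MemLp (fun ω => bF (fun j => μ' j + ε j ω) l i) 2 ℙ) ∧
      Integrable (fun ω => KF (fun j => μ' j + ε j ω) l) ℙ ∧
      (∫ ω, KF (fun j => μ' j + ε j ω) l) = (1 / σ ^ 2) *
        ∑ i, cov (fun ω => bF (fun j => μ' j + ε j ω) l i) (fun ω => μ' i + ε i ω))
    (lF lNI : ℝ) (hlF : 0 ≤ lF) (hlNI : 0 ≤ lNI) :
    (∫ ω, KFNI (Y ω) lF lNI) = (1 / σ ^ 2) *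
      ∑ i, cov (fun ω => bFNI (Y ω) lF lNI i) (fun ω => Y ω i) := by
  have hl : 0 ≤ lF + lNI / 2 := by linarith
  obtain ⟨hL2Y, hL2b, hInt, hEq⟩ :=
    hdfF (fun i => μ i - lNI / 2 * dvec n i) (lF + lNI / 2) hl
  have hy' : ∀ ω, (fun j => μ j - lNI / 2 * dvec n j + ε j ω)
      = fun i => Y ω i - lNI / 2 * dvec n i := by
    intro ω; funext j; rw [hY]; ring
  have key : ∀ ω, bFNI (Y ω) lF lNI
      = bF (fun j => μ j - lNI / 2 * dvec n j + ε j ω) (lF + lNI / 2) := by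
    intro ω
    rw [hy' ω]
    refine flni1_min_unique (fun i => Y ω i - lNI / 2 * dvec n i) (lF + lNI / 2) 0 0 hl le_rfl le_rfl _ _ ?_ ?_
    · intro β
      have h1 := hbFNI (Y ω) lF lNI β
      have h2 := flni1_shift (Y ω) lF lNI β
      have h3 := flni1_shift (Y ω) lF lNI (bFNI (Y ω) lF lNI)
      rw [h2, h3] at h1
      linarith
    · exact fun β => hbF _ _ β
  have hIeq : ∫ ω, KFNI (Y ω) lF lNI
      = ∫ ω, KF (fun j => μ j - lNI / 2 * dvec n j + ε j ω) (lF + lNI / 2) := by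
    congr 1
    funext ω
    rw [hKFNI, hKF, key ω]
  rw [hIeq, hEq]
  congr 1
  refine Finset.sum_congr rfl fun i _ => ?_
  have hbeq : (fun ω => bFNI (Y ω) lF lNI i)
      = fun ω => bF (fun j => μ j - lNI / 2 * dvec n j + ε j ω) (lF + lNI / 2) i :=
    funext fun ω => by rw [key ω]
  have hYeq : (fun ω => Y ω i)
      = fun ω => (μ i - lNI / 2 * dvec n i + ε i ω) + lNI / 2 * dvec n i :=
    funext fun ω => by rw [hY]; ring
  rw [hbeq, hYeq]
  exact (cov_add_const _ _ _ (hL2b i) (hL2Y i)).symm
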